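/- Suppose an upper-triangular-type linear system over a field holds: for variables x₀, x₁, ..., x_r and for each q ∈ {0,...,r} the equation Σ_{q'=0}^{r} C^{r+q-q'+1}(k) · x_{q'} = 0, where C^s(k) = 2^s binomial(k,s) (zero for s > k), and r < k. Then x₀ = x₁ = ⋯ = x_r = 0. -/

import Mathlib

open Finset

open Polynomial

lemma aux_key (a : ℚ) (ha : a ≠ 0) :
    ∀ N : ℕ, ∀ F : ℚ[X], F.natDegree ≤ N → F ≠ 0 →
      ∀ m : ℕ, (X - C a) ^ m ∣ F → m < F.support.card := by
  intro N
  induction N with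
  | zero =>
    intro F hN hF m hdvd
    match m with
    | 0 => simpa using Finset.card_pos.2 (nonempty_support_iff.2 hF)
    | m + 1 =>
      have := natDegree_le_of_dvd hdvd hF
      rw [natDegree_pow, natDegree_X_sub_C, mul_one] at this
      omega
  | succ N ih =>
    intro F hN hF m hdvd
    match m with
    | 0 => simpa using Finset.card_pos.2 (nonempty_support_iff.2 hF)
    | m + 1 =>
      have hdegF : m + 1 ≤ F.natDegree := by
        have := natDegree_le_of_dvd hdvd hF
        rwa [natDegree_pow, natDegree_X_sub_C, mul_one] at this
      by_cases h0 : F.coeff 0 = 0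
      · obtain ⟨G, hG⟩ := X_dvd_iff.2 h0
        have hGne : G ≠ 0 := by rintro rfl; simp at hG; exact hF hG
        have hdegG : G.natDegree ≤ N := by
          have : F.natDegree = G.natDegree + 1 := by
            rw [hG, natDegree_X_mul hGne]
          omega
        have hcop : IsCoprime ((X - C a) ^ (m + 1)) (X : ℚ[X]) := by
          refine IsCoprime.pow_left ⟨-C a⁻¹, C a⁻¹, ?_⟩
          have : -C a⁻¹ * (X - C a) + C a⁻¹ * X = C a⁻¹ * C a := by ring
          rw [this, ← C_mul, inv_mul_cancel₀ ha, C_1]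
        have hdvdG : (X - C a) ^ (m + 1) ∣ G := by
          refine hcop.dvd_of_dvd_mul_left ?_
          rwa [← hG]
        have hlt := ih G hdegG hGne (m + 1) hdvdG
        refine lt_of_lt_of_le hlt ?_
        refine Finset.card_le_card_of_injOn (· + 1) ?_ (by intro x _ y _ hxy; simpa using hxy)
        intro n hn
        simp only [Finset.mem_coe] at hn ⊢
        rw [mem_support_iff] at hn ⊢
        rwa [hG, coeff_X_mul]
      · -- derivative case
        obtain ⟨H, hH⟩ := hdvd
        have hdvd' : (X - C a) ^ m ∣ derivative F := by
          refine ⟨(m + 1 : ℚ[X]) * H + (X - C a) * derivative H, ?_⟩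
          rw [hH]
          simp only [derivative_mul, derivative_pow, derivative_sub, derivative_X,
            derivative_C, sub_zero, mul_one, C_eq_natCast]
          push_cast
          ring
        have hndF : F.natDegree ≠ 0 := by omega
        have hF' : derivative F ≠ 0 := by
          intro hzero
          have := natDegree_eq_zero_of_derivative_eq_zero hzero
          exact hndF this
        have hdeg' : (derivative F).natDegree ≤ N := by
          have := natDegree_derivative_lt hndF
          omega
        have hlt := ih (derivative F) hdeg' hF' m hdvd'
        have hcard : (derivative F).support.card ≤ F.support.card - 1 := by
          have hsub : (derivative F).support.card ≤ (F.support.erase 0).card := by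
            refine Finset.card_le_card_of_injOn (· + 1) ?_ (by intro x _ y _ hxy; simpa using hxy)
            intro n hn
            simp only [Finset.mem_coe] at hn ⊢
            rw [mem_support_iff, coeff_derivative] at hn
            rw [Finset.mem_erase, mem_support_iff]
            constructor
            · simp
            · intro hc; rw [hc, zero_mul] at hn; exact hn rfl
          rwa [Finset.card_erase_of_mem (mem_support_iff.2 h0)] at hsub
        have h0mem : 0 < F.support.card := Finset.card_pos.2 (nonempty_support_iff.2 hF)
        omega

theorem linear_system_C_only_zero_solution (k r : ℕ) (hr : r < k)
    (V : Type*) [AddCommGroup V] [Module ℚ V] (x : Fin (r + 1) → V)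
    (h : ∀ q : Fin (r + 1),
      ∑ q' : Fin (r + 1),
        ((2 ^ (r + q.val + 1 - q'.val) *
            Nat.choose k (r + q.val + 1 - q'.val) : ℕ) : ℚ) • x q' = 0) :
    ∀ q' : Fin (r + 1), x q' = 0 := by
  intro q'
  rw [← Module.forall_dual_apply_eq_zero_iff ℚ]
  intro φ
  classical
  set y : Fin (r + 1) → ℚ := fun j => φ (x j) with hy
  have hsys : ∀ q : Fin (r + 1), ∑ j : Fin (r + 1),
      ((2 ^ (r + q.val + 1 - j.val) * Nat.choose k (r + q.val + 1 - j.val) : ℕ) : ℚ) * y j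
        = 0 := by
    intro q
    have := congrArg φ (h q)
    simpa [map_sum, map_smul, smul_eq_mul] using this
  set A : ℚ[X] := (1 + 2 * X) ^ k with hA
  have coeffA : ∀ s : ℕ, A.coeff s = ((2 ^ s * Nat.choose k s : ℕ) : ℚ) := by
    intro s
    have hexp : A = ∑ i ∈ Finset.range (k + 1),
        C ((2 : ℚ) ^ i * (Nat.choose k i : ℚ)) * X ^ i := by
      rw [hA, add_comm, add_pow]
      refine Finset.sum_congr rfl fun i _ => ?_
      have hC2 : (C 2 : ℚ[X]) = 2 := map_ofNat C 2
      rw [mul_pow, one_pow, mul_one, C_mul, C_pow, ← C_eq_natCast, hC2]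
      ring
    rw [hexp, finset_sum_coeff]
    simp only [coeff_C_mul, coeff_X_pow, mul_ite, mul_one, mul_zero]
    rw [Finset.sum_ite_eq (Finset.range (k + 1)) s
      (fun i => (2 : ℚ) ^ i * (Nat.choose k i : ℚ))]
    by_cases hs : s ∈ Finset.range (k + 1)
    · rw [if_pos hs]; push_cast; ring
    · rw [if_neg hs]
      rw [Finset.mem_range] at hs
      rw [Nat.choose_eq_zero_of_lt (by omega)]
      push_cast; ring
  set P : ℚ[X] := ∑ j : Fin (r + 1), C (y j) * X ^ (j : ℕ) with hP
  set F : ℚ[X] := P * A with hF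
  have hmid : ∀ n : ℕ, r + 1 ≤ n → n ≤ 2 * r + 1 → F.coeff n = 0 := by
    intro n hn1 hn2
    have hcoeff : F.coeff n = ∑ j : Fin (r + 1), y j * A.coeff (n - (j : ℕ)) := by
      rw [hF, hP, Finset.sum_mul, finset_sum_coeff]
      refine Finset.sum_congr rfl fun j _ => ?_
      rw [mul_assoc, coeff_C_mul, coeff_X_pow_mul' A (j : ℕ) n,
        if_pos (by omega : (j : ℕ) ≤ n)]
    rw [hcoeff]
    have hq : n - (r + 1) < r + 1 := by omega
    have := hsys ⟨n - (r + 1), hq⟩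
    simp only at this
    have hn' : r + (n - (r + 1)) + 1 = n := by omega
    rw [hn'] at this
    rw [← this]
    refine Finset.sum_congr rfl fun j _ => ?_
    rw [coeffA]
    ring
  have hcoeffP : ∀ j : Fin (r + 1), P.coeff (j : ℕ) = y j := by
    intro j
    rw [hP, finset_sum_coeff]
    rw [Finset.sum_eq_single j]
    · simp
    · intro j' _ hne
      rw [coeff_C_mul, coeff_X_pow,
        if_neg (fun hc => hne (Fin.val_injective hc).symm), mul_zero]
    · intro habs; exact absurd (Finset.mem_univ j) habs
  have hP0 : P = 0 := by
    by_contra hPne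
    have hAne : A ≠ 0 := by
      refine pow_ne_zero _ fun hzero => ?_
      have := congrArg (fun p => Polynomial.coeff p 0) hzero
      simp at this
    have hFne : F ≠ 0 := mul_ne_zero hPne hAne
    have hfac : (1 + 2 * X : ℚ[X]) = C 2 * (X - C (-2⁻¹)) := by
      have hC2 : (C 2 : ℚ[X]) = 2 := map_ofNat C 2
      have hval : (2 : ℚ) * (-2⁻¹) = -1 := by norm_num
      rw [mul_sub, ← C_mul, hval, hC2]
      simp only [C_neg, C_1]
      ring
    have hdvd : (X - C (-2⁻¹ : ℚ)) ^ k ∣ F := by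
      refine ⟨P * C 2 ^ k, ?_⟩
      rw [hF, hA, hfac, mul_pow]
      ring
    have hkey := aux_key (-2⁻¹ : ℚ) (by norm_num) F.natDegree F le_rfl hFne k hdvd
    -- support bound
    have hdegP : P.natDegree ≤ r := by
      rw [hP]
      refine (natDegree_sum_le _ _).trans ?_
      rw [Finset.fold_max_le]
      refine ⟨by omega, fun j _ => ?_⟩
      exact (natDegree_C_mul_le _ _).trans (by simp [natDegree_X_pow]; omega)
    have hdegA : A.natDegree ≤ k := by
      rw [hA]
      refine natDegree_pow_le.trans ?_
      have h1 : (1 + 2 * X : ℚ[X]).natDegree ≤ 1 := by compute_degree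
      calc k * (1 + 2 * X : ℚ[X]).natDegree ≤ k * 1 := Nat.mul_le_mul_left _ h1
        _ = k := mul_one k
    have hdegF : F.natDegree ≤ k + r := by
      refine (natDegree_mul_le).trans ?_
      omega
    have hsub : F.support ⊆ Finset.range (k + r + 1) \ Finset.Icc (r + 1) (2 * r + 1) := by
      intro n hn
      rw [mem_support_iff] at hn
      rw [Finset.mem_sdiff, Finset.mem_range, Finset.mem_Icc]
      constructor
      · have := le_natDegree_of_ne_zero hn
        omega
      · intro ⟨h1, h2⟩
        exact hn (hmid n h1 h2)
    have hcardS : (Finset.range (k + r + 1) \ Finset.Icc (r + 1) (2 * r + 1)).card = k := by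
      rw [Finset.card_sdiff_of_subset]
      · rw [Finset.card_range, Nat.card_Icc]
        omega
      · intro a ha
        rw [Finset.mem_Icc] at ha
        rw [Finset.mem_range]
        omega
    have := Finset.card_le_card hsub
    omega
  have : P.coeff (q' : ℕ) = 0 := by rw [hP0]; simp
  rw [hcoeffP q'] at this
  exact this
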